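/- arXiv:2411.11741 — 2 statements merged into one kernel-verified Lean document; each statement's English description precedes it below -/
import Mathlib

section
/- Let n ∈ ℕ, p ∈ [0,1]^n, and let f : {0,1}^n → ℝ be monotone and 1-Lipschitz. Then for every λ ∈ (0,1], ∫ e^{λ f(x)} dμ_{e^{-λ}p}(x) ≤ exp(λ · ∫ f dμ_p). (That is, E[e^{λ Z^{(λ)}}] ≤ e^{λ E[Z^{(0)}]}, where Z^{(λ)} = f(X^{(λ)}) and X^{(λ)} ∼ μ_{e^{-λ}p}.) -/
open MeasureTheory

/-- The Bernoulli measure on `Bool` with parameter `q`. -/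
noncomputable def bernoulliMeasure (q : ℝ) : Measure Bool :=
  (ENNReal.ofReal q) • Measure.dirac true + (ENNReal.ofReal (1 - q)) • Measure.dirac false

/-- The product Bernoulli measure `μ_p` on `{0,1}^n`. -/
noncomputable def productBernoulli {n : ℕ} (p : Fin n → ℝ) : Measure (Fin n → Bool) :=
  Measure.pi fun i => bernoulliMeasure (p i)

/-- `f` is 1-Lipschitz with respect to the Hamming distance on `{0,1}^n`. -/
def OneLipschitz {n : ℕ} (f : (Fin n → Bool) → ℝ) : Prop :=
  ∀ x y : Fin n → Bool,
    |f x - f y| ≤ (Finset.univ.filter fun i => x i ≠ y i).card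

/-- weight of a Bernoulli outcome -/
def bw (q : ℝ) (b : Bool) : ℝ := if b then q else 1 - q

lemma bw_nonneg {q : ℝ} (hq : q ∈ Set.Icc (0:ℝ) 1) (b : Bool) : 0 ≤ bw q b := by
  cases b <;> simp [bw] <;> [linarith [hq.2]; exact hq.1]

lemma prod_bw_nonneg {n : ℕ} {p : Fin n → ℝ} (hp : ∀ i, p i ∈ Set.Icc (0:ℝ) 1)
    (x : Fin n → Bool) : 0 ≤ ∏ i, bw (p i) (x i) :=
  Finset.prod_nonneg fun i _ => bw_nonneg (hp i) _

lemma sum_prod_bw {n : ℕ} (p : Fin n → ℝ) :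
    ∑ x : Fin n → Bool, ∏ i, bw (p i) (x i) = 1 := by
  induction n with
  | zero => simp
  | succ n ih =>
    rw [← Equiv.sum_comp (Fin.consEquiv fun _ => Bool)
        (fun x => ∏ i, bw (p i) (x i)), Fintype.sum_prod_type]
    simp only [Fin.consEquiv_apply, Fin.prod_univ_succ, Fin.cons_zero, Fin.cons_succ]
    rw [Fintype.sum_bool]
    simp only [← Finset.mul_sum, ih fun i => p i.succ]
    simp [bw]

/-- scaling factor stays in [0,1] -/
lemma scaled_mem {q l : ℝ} (hq : q ∈ Set.Icc (0:ℝ) 1) (hl : l ∈ Set.Ioc (0:ℝ) 1) :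
    Real.exp (-l) * q ∈ Set.Icc (0:ℝ) 1 := by
  have h1 : Real.exp (-l) ≤ 1 := Real.exp_le_one_iff.mpr (by linarith [hl.1])
  have h2 : (0:ℝ) < Real.exp (-l) := Real.exp_pos _
  constructor
  · exact mul_nonneg h2.le hq.1
  · calc Real.exp (-l) * q ≤ 1 * 1 := mul_le_mul h1 hq.2 hq.1 zero_le_one
      _ = 1 := one_mul 1

/-- the one-dimensional inequality -/
lemma onedim {q a l : ℝ} (c : ℝ) (hq : q ∈ Set.Icc (0:ℝ) 1) (ha : a ∈ Set.Icc (0:ℝ) 1)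
    (hl : l ∈ Set.Ioc (0:ℝ) 1) :
    Real.exp (-l) * q * Real.exp (l * (c + a)) + (1 - Real.exp (-l) * q) * Real.exp (l * c)
      ≤ Real.exp (l * (q * (c + a) + (1 - q) * c)) := by
  obtain ⟨hl0, hl1⟩ := hl
  obtain ⟨ha0, ha1⟩ := ha
  obtain ⟨hq0, hq1⟩ := hq
  have hec : (0:ℝ) < Real.exp (l * c) := Real.exp_pos _
  -- convexity : exp (l * a) ≤ 1 + a * (exp l - 1)
  have hconv : Real.exp (l * a) ≤ 1 + a * (Real.exp l - 1) := by
    have := convexOn_exp.2 (Set.mem_univ (0:ℝ)) (Set.mem_univ l)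
      (by linarith : (0:ℝ) ≤ 1 - a) ha0 (by ring)
    simp only [smul_eq_mul, mul_zero, zero_add, Real.exp_zero] at this
    rw [mul_comm]
    calc Real.exp (a * l) ≤ (1 - a) * 1 + a * Real.exp l := this
      _ = 1 + a * (Real.exp l - 1) := by ring
  have hexp : 1 - Real.exp (-l) ≤ l := by
    have := Real.add_one_le_exp (-l)
    linarith
  have key : Real.exp (-l) * q * Real.exp (l * a) + (1 - Real.exp (-l) * q)
      ≤ Real.exp (l * (q * a)) := by
    have he : (0:ℝ) ≤ Real.exp (-l) * q := by positivity
    have step1 : Real.exp (-l) * q * Real.exp (l * a) + (1 - Real.exp (-l) * q)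
        ≤ 1 + Real.exp (-l) * q * a * (Real.exp l - 1) := by
      nlinarith [mul_le_mul_of_nonneg_left hconv he]
    have hmul : Real.exp (-l) * Real.exp l = 1 := by
      rw [← Real.exp_add]; simp
    have step2 : Real.exp (-l) * q * a * (Real.exp l - 1) = q * a * (1 - Real.exp (-l)) := by
      calc Real.exp (-l) * q * a * (Real.exp l - 1)
          = q * a * (Real.exp (-l) * Real.exp l - Real.exp (-l)) := by ring
        _ = q * a * (1 - Real.exp (-l)) := by rw [hmul]
    have step3 : q * a * (1 - Real.exp (-l)) ≤ q * a * l :=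
      mul_le_mul_of_nonneg_left hexp (by positivity)
    have step4 : 1 + q * a * l ≤ Real.exp (l * (q * a)) := by
      have := Real.add_one_le_exp (l * (q * a))
      linarith
    calc Real.exp (-l) * q * Real.exp (l * a) + (1 - Real.exp (-l) * q)
        ≤ 1 + Real.exp (-l) * q * a * (Real.exp l - 1) := step1
      _ = 1 + q * a * (1 - Real.exp (-l)) := by rw [step2]
      _ ≤ 1 + q * a * l := by linarith
      _ ≤ Real.exp (l * (q * a)) := step4
  calc Real.exp (-l) * q * Real.exp (l * (c + a)) + (1 - Real.exp (-l) * q) * Real.exp (l * c)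
      = (Real.exp (-l) * q * Real.exp (l * a) + (1 - Real.exp (-l) * q)) * Real.exp (l * c) := by
        rw [mul_add l c a, Real.exp_add]; ring
    _ ≤ Real.exp (l * (q * a)) * Real.exp (l * c) := by
        apply mul_le_mul_of_nonneg_right key hec.le
    _ = Real.exp (l * (q * (c + a) + (1 - q) * c)) := by
        rw [← Real.exp_add]; congr 1; ring

lemma key_sum {n : ℕ} (p : Fin n → ℝ) (hp : ∀ i, p i ∈ Set.Icc (0:ℝ) 1)
    (f : (Fin n → Bool) → ℝ) (hf_mono : Monotone f) (hf_lip : OneLipschitz f)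
    (l : ℝ) (hl : l ∈ Set.Ioc (0:ℝ) 1) :
    ∑ x : Fin n → Bool, (∏ i, bw (Real.exp (-l) * p i) (x i)) * Real.exp (l * f x)
      ≤ Real.exp (l * ∑ x : Fin n → Bool, (∏ i, bw (p i) (x i)) * f x) := by
  induction n with
  | zero =>
    simp
  | succ n ih =>
    set p' : Fin n → ℝ := fun i => p i.succ with hp'
    have hp'mem : ∀ i, p' i ∈ Set.Icc (0:ℝ) 1 := fun i => hp i.succ
    set g : Bool → ℝ := fun b => ∑ y : Fin n → Bool, (∏ i, bw (p' i) (y i)) * f (Fin.cons b y)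
      with hg
    -- auxiliary : monotonicity of cons
    have hcons_le : ∀ (b : Bool) (y y' : Fin n → Bool), y ≤ y' →
        (Fin.cons b y : Fin (n+1) → Bool) ≤ Fin.cons b y' := by
      intro b y y' hyy i
      induction i using Fin.cases with
      | zero => simp
      | succ j => simpa using hyy j
    -- rewrite both sums via consEquiv
    have hsplit : ∀ (q : Fin (n+1) → ℝ) (F : (Fin (n+1) → Bool) → ℝ),
        ∑ x : Fin (n+1) → Bool, (∏ i, bw (q i) (x i)) * F x
          = ∑ b : Bool, bw (q 0) b *
              ∑ y : Fin n → Bool, (∏ i, bw (q i.succ) (y i)) * F (Fin.cons b y) := by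
      intro q F
      rw [← Equiv.sum_comp (Fin.consEquiv fun _ => Bool)
          (fun x => (∏ i, bw (q i) (x i)) * F x), Fintype.sum_prod_type]
      refine Finset.sum_congr rfl fun b _ => ?_
      rw [Finset.mul_sum]
      refine Finset.sum_congr rfl fun y _ => ?_
      simp only [Fin.consEquiv, Equiv.coe_fn_mk, Fin.prod_univ_succ, Fin.cons_zero, Fin.cons_succ]
      ring
    rw [hsplit, hsplit]
    -- inner bound by ih
    have hinner : ∀ b : Bool,
        ∑ y : Fin n → Bool, (∏ i, bw (Real.exp (-l) * p i.succ) (y i)) * Real.exp (l * f (Fin.cons b y))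
          ≤ Real.exp (l * g b) := by
      intro b
      refine ih p' hp'mem (fun y => f (Fin.cons b y)) ?_ ?_
      · intro y y' hyy
        exact hf_mono (hcons_le b y y' hyy)
      · intro y y'
        refine le_trans (hf_lip _ _) ?_
        have hcard : ((Finset.univ.filter fun i => (Fin.cons b y : Fin (n+1) → Bool) i ≠ (Fin.cons b y' : Fin (n+1) → Bool) i).card : ℝ)
            = ((Finset.univ.filter fun i => y i ≠ y' i).card : ℝ) := by
          rw [Finset.card_filter, Finset.card_filter, Fin.sum_univ_succ]
          simp [Fin.cons_zero, Fin.cons_succ]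
        exact le_of_eq hcard
    -- bounds on g
    have hwsum : ∑ y : Fin n → Bool, ∏ i, bw (p' i) (y i) = 1 := sum_prod_bw p'
    have hga : g true - g false ∈ Set.Icc (0:ℝ) 1 := by
      have hdiff : g true - g false
          = ∑ y : Fin n → Bool, (∏ i, bw (p' i) (y i)) * (f (Fin.cons true y) - f (Fin.cons false y)) := by
        simp only [hg, ← Finset.sum_sub_distrib, mul_sub]
      have hfb_le : ∀ y : Fin n → Bool, f (Fin.cons false y) ≤ f (Fin.cons true y) := by
        intro y
        refine hf_mono fun i => ?_
        induction i using Fin.cases with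
        | zero => simp
        | succ j => simp
      have hfb_one : ∀ y : Fin n → Bool, f (Fin.cons true y) - f (Fin.cons false y) ≤ 1 := by
        intro y
        have h1 := hf_lip (Fin.cons true y) (Fin.cons false y)
        have hcard : ((Finset.univ.filter fun i => (Fin.cons true y : Fin (n+1) → Bool) i ≠ (Fin.cons false y : Fin (n+1) → Bool) i).card : ℕ)
            = 1 := by
          rw [Finset.card_filter, Fin.sum_univ_succ]
          simp [Fin.cons_zero, Fin.cons_succ]
        rw [hcard] at h1
        have := le_of_abs_le h1
        simpa using this
      constructor
      · rw [hdiff]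
        refine Finset.sum_nonneg fun y _ => ?_
        exact mul_nonneg (prod_bw_nonneg hp'mem y) (by linarith [hfb_le y])
      · rw [hdiff]
        calc ∑ y : Fin n → Bool, (∏ i, bw (p' i) (y i)) * (f (Fin.cons true y) - f (Fin.cons false y))
            ≤ ∑ y : Fin n → Bool, (∏ i, bw (p' i) (y i)) * 1 := by
              refine Finset.sum_le_sum fun y _ => ?_
              exact mul_le_mul_of_nonneg_left (hfb_one y) (prod_bw_nonneg hp'mem y)
          _ = 1 := by simp [hwsum]
    -- weights nonneg
    have hw0 : ∀ b, 0 ≤ bw (Real.exp (-l) * p 0) b :=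
      bw_nonneg (scaled_mem (hp 0) hl)
    -- step A : bound inner sums
    have stepA : ∑ b : Bool, bw (Real.exp (-l) * p 0) b *
          ∑ y : Fin n → Bool, (∏ i, bw (Real.exp (-l) * p i.succ) (y i)) * Real.exp (l * f (Fin.cons b y))
        ≤ ∑ b : Bool, bw (Real.exp (-l) * p 0) b * Real.exp (l * g b) := by
      refine Finset.sum_le_sum fun b _ => ?_
      exact mul_le_mul_of_nonneg_left (hinner b) (hw0 b)
    refine le_trans stepA ?_
    -- step B : one-dimensional inequality
    have hq0 := hp 0
    have h1d := onedim (g false) hq0 hga hl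
    have hlhs : ∑ b : Bool, bw (Real.exp (-l) * p 0) b * Real.exp (l * g b)
        = Real.exp (-l) * p 0 * Real.exp (l * (g false + (g true - g false)))
          + (1 - Real.exp (-l) * p 0) * Real.exp (l * g false) := by
      rw [Fintype.sum_bool]
      simp only [bw, if_true, Bool.false_eq_true, if_false]
      ring
    have hrhs : ∑ b : Bool, bw (p 0) b * g b
        = p 0 * (g false + (g true - g false)) + (1 - p 0) * g false := by
      rw [Fintype.sum_bool]
      simp only [bw, if_true, Bool.false_eq_true, if_false]
      ring
    rw [hlhs, hrhs]
    exact h1d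

lemma bernoulliMeasure_singleton {q : ℝ} (hq : q ∈ Set.Icc (0:ℝ) 1) (b : Bool) :
    bernoulliMeasure q {b} = ENNReal.ofReal (bw q b) := by
  rw [bernoulliMeasure]
  rw [Measure.add_apply, Measure.smul_apply, Measure.smul_apply,
    Measure.dirac_apply' _ (measurableSet_singleton b),
    Measure.dirac_apply' _ (measurableSet_singleton b)]
  cases b <;> simp [bw]

lemma instProbBernoulli : ∀ {q : ℝ}, q ∈ Set.Icc (0:ℝ) 1 →
    IsProbabilityMeasure (bernoulliMeasure q) := by
  intro q hq
  constructor
  rw [bernoulliMeasure, Measure.add_apply, Measure.smul_apply, Measure.smul_apply]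
  simp only [measure_univ, smul_eq_mul, mul_one]
  rw [← ENNReal.ofReal_add hq.1 (by linarith [hq.2])]
  norm_num

lemma productBernoulli_singleton {n : ℕ} {p : Fin n → ℝ} (hp : ∀ i, p i ∈ Set.Icc (0:ℝ) 1)
    (x : Fin n → Bool) :
    productBernoulli p {x} = ENNReal.ofReal (∏ i, bw (p i) (x i)) := by
  haveI : ∀ i, IsProbabilityMeasure (bernoulliMeasure (p i)) :=
    fun i => instProbBernoulli (hp i)
  haveI : ∀ i, SigmaFinite (bernoulliMeasure (p i)) := fun i => inferInstance
  rw [productBernoulli, ← Set.univ_pi_singleton x, Measure.pi_pi]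
  rw [ENNReal.ofReal_prod_of_nonneg (fun i _ => bw_nonneg (hp i) (x i))]
  exact Finset.prod_congr rfl fun i _ => bernoulliMeasure_singleton (hp i) (x i)

lemma integral_productBernoulli {n : ℕ} {p : Fin n → ℝ} (hp : ∀ i, p i ∈ Set.Icc (0:ℝ) 1)
    (g : (Fin n → Bool) → ℝ) :
    ∫ x, g x ∂(productBernoulli p) = ∑ x : Fin n → Bool, (∏ i, bw (p i) (x i)) * g x := by
  haveI : ∀ i, IsProbabilityMeasure (bernoulliMeasure (p i)) :=
    fun i => instProbBernoulli (hp i)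
  haveI : IsProbabilityMeasure (productBernoulli p) := by
    rw [productBernoulli]; infer_instance
  rw [integral_fintype (Integrable.of_finite)]
  refine Finset.sum_congr rfl fun x _ => ?_
  rw [measureReal_def, productBernoulli_singleton hp x, ENNReal.toReal_ofReal (prod_bw_nonneg hp x)]
  simp [smul_eq_mul]

/-- For a monotone 1-Lipschitz `f` and any `λ ∈ (0,1]`,
`E[e^{λ Z^{(λ)}}] ≤ e^{λ E[Z^{(0)}]}` where `Z^{(λ)} = f(X^{(λ)})` and
`X^{(λ)} ∼ μ_{e^{-λ}p}`. -/
theorem mgf_of_scaled_bounded {n : ℕ} (p : Fin n → ℝ)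
    (hp : ∀ i, p i ∈ Set.Icc (0 : ℝ) 1)
    (f : (Fin n → Bool) → ℝ) (hf_mono : Monotone f) (hf_lip : OneLipschitz f)
    (l : ℝ) (hl : l ∈ Set.Ioc (0 : ℝ) 1) :
    (∫ x, Real.exp (l * f x) ∂(productBernoulli (fun i => Real.exp (-l) * p i)))
      ≤ Real.exp (l * ∫ x, f x ∂(productBernoulli p)) := by
  rw [integral_productBernoulli (fun i => scaled_mem (hp i) hl) (fun x => Real.exp (l * f x)),
    integral_productBernoulli hp f]
  exact key_sum p hp f hf_mono hf_lip l hl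
end

section
/- Let M be a matroid on a finite ground set E, let k ≥ 1 be an integer, and let N be the extended k-fold union of M, with closure (span) operator closure_N. If S₀ ⊆ E and B ⊆ S₀ is a basis of S₀ in M (i.e., B is M-independent and every element of S₀ lies in the M-closure of B), then S₀ × [k] ⊆ closure_N(B × [k]). -/
/-- The rank of a set `S` in a matroid `M`: the maximum cardinality of an
independent subset of `S`. -/
noncomputable def matroidRank {α : Type*} (M : Matroid α) (S : Set α) : ℕ :=
  sSup {r | ∃ I : Set α, I ⊆ S ∧ M.Indep I ∧ I.ncard = r}

/-- The span (closure) of a set `S` in a matroid `M`: the elements whose addition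
does not increase the rank. -/
noncomputable def matroidSpan {α : Type*} (M : Matroid α) (S : Set α) : Set α :=
  {a | matroidRank M (S ∪ {a}) = matroidRank M S}

/-- The independence predicate of the extended `k`-fold union of `M`: a set
`S ⊆ E × [k]` is independent iff it is a union `S₁ ∪ ⋯ ∪ S_k` where each `S_j`
has pairwise distinct first coordinates and the set of first coordinates of `S_j`
is independent in `M`. -/
def ExtendedIndep {α : Type*} (M : Matroid α) (k : ℕ) (S : Set (α × Fin k)) : Prop :=
  ∃ Ss : Fin k → Set (α × Fin k),
    S = ⋃ j, Ss j ∧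
    ∀ j, Set.InjOn Prod.fst (Ss j) ∧ M.Indep (Prod.fst '' Ss j)

/-- The occupancy function `occ_e(S) = k − rank_N(S ∪ ({e} × [k])) + rank_N(S)`,
valued in `ℤ`. -/
noncomputable def occ {α : Type*} {k : ℕ} (N : Matroid (α × Fin k)) (e : α)
    (S : Set (α × Fin k)) : ℤ :=
  (k : ℤ) - matroidRank N (S ∪ ({e} ×ˢ (Set.univ : Set (Fin k)))) + matroidRank N S

lemma mr_le {α : Type*} (M : Matroid α) (S : Set α) (n : ℕ)
    (h : ∀ I, I ⊆ S → M.Indep I → I.ncard ≤ n) : matroidRank M S ≤ n := by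
  refine csSup_le ⟨0, ∅, Set.empty_subset _, M.empty_indep, Set.ncard_empty _⟩ ?_
  rintro r ⟨I, hIS, hI, rfl⟩
  exact h I hIS hI

lemma le_mr {α : Type*} (M : Matroid α) {S I : Set α} (hfin : S.Finite)
    (hIS : I ⊆ S) (hI : M.Indep I) : I.ncard ≤ matroidRank M S := by
  refine le_csSup ⟨S.ncard, ?_⟩ ⟨I, hIS, hI, rfl⟩
  rintro r ⟨J, hJS, _, rfl⟩
  exact Set.ncard_le_ncard hJS hfin

lemma ncard_iUnion_le_sum {ι α : Type*} [Fintype ι] (s : ι → Set α) :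
    (⋃ i, s i).ncard ≤ ∑ i, (s i).ncard := by
  classical
  have aux : ∀ t : Finset ι, (⋃ i ∈ t, s i).ncard ≤ ∑ i ∈ t, (s i).ncard := by
    intro t
    induction t using Finset.induction with
    | empty => simp
    | insert _ _ h ih =>
      rw [Finset.set_biUnion_insert, Finset.sum_insert h]
      exact (Set.ncard_union_le _ _).trans (by omega)
  have := aux Finset.univ
  simpa using this

lemma ncard_prod_univ {α : Type*} (k : ℕ) (s : Set α) :
    (s ×ˢ (Set.univ : Set (Fin k))).ncard = k * s.ncard := by
  rw [← Nat.card_coe_set_eq, Nat.card_congr (Equiv.Set.prod s Set.univ),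
    Nat.card_prod, Nat.card_coe_set_eq, Nat.card_coe_set_eq, Set.ncard_univ,
    Nat.card_eq_fintype_card, Fintype.card_fin, Nat.mul_comm]

/-- If `B` is a basis of `S₀` in `M`, then `S₀ × [k]` is spanned by `B × [k]` in the
extended `k`-fold union of `M`. -/
theorem prod_subset_span_basis_prod {α : Type*} (M : Matroid α) (hfin : M.E.Finite)
    (k : ℕ) (hk : 1 ≤ k)
    (N : Matroid (α × Fin k)) (hNE : N.E = M.E ×ˢ (Set.univ : Set (Fin k)))
    (hN : ∀ S : Set (α × Fin k), N.Indep S ↔ ExtendedIndep M k S)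
    (S₀ : Set α) (hS₀ : S₀ ⊆ M.E) (B : Set α) (hBS : B ⊆ S₀)
    (hBindep : M.Indep B) (hBspan : S₀ ⊆ matroidSpan M B) :
    S₀ ×ˢ (Set.univ : Set (Fin k)) ⊆ matroidSpan N (B ×ˢ (Set.univ : Set (Fin k))) := by
  rintro ⟨e, j₀⟩ ⟨he, -⟩
  have hBfin : B.Finite := hfin.subset (hBS.trans hS₀)
  have hBefin : (B ∪ {e}).Finite := hBfin.union (Set.finite_singleton e)
  -- rank of B in M is |B|, and rank of B ∪ {e} equals it
  have hMB : matroidRank M B = B.ncard := by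
    refine le_antisymm (mr_le M B B.ncard fun I hIS _ => Set.ncard_le_ncard hIS hBfin) ?_
    exact le_mr M hBfin subset_rfl hBindep
  have hMbd : ∀ I, I ⊆ B ∪ {e} → M.Indep I → I.ncard ≤ B.ncard := by
    intro I hIS hI
    have h1 : I.ncard ≤ matroidRank M (B ∪ {e}) := le_mr M hBefin hIS hI
    have h2 : matroidRank M (B ∪ {e}) = matroidRank M B := hBspan he
    omega
  set T : Set (α × Fin k) := B ×ˢ (Set.univ : Set (Fin k)) with hT
  have hTfin : T.Finite := hBfin.prod Set.finite_univ
  have hTcard : T.ncard = k * B.ncard := ncard_prod_univ k B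
  have hTindep : N.Indep T := by
    rw [hN]
    refine ⟨fun j => B ×ˢ ({j} : Set (Fin k)), ?_, fun j => ⟨?_, ?_⟩⟩
    · ext ⟨a, i⟩
      simp only [Set.mem_iUnion, Set.mem_prod, Set.mem_singleton_iff, hT]
      constructor
      · rintro ⟨hb, -⟩; exact ⟨i, hb, rfl⟩
      · rintro ⟨i', hb, rfl⟩; exact ⟨hb, Set.mem_univ _⟩
    · rintro ⟨a, i⟩ ⟨ha, hi⟩ ⟨b, i'⟩ ⟨hb, hi'⟩ hab
      simp only [Set.mem_singleton_iff] at hi hi'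
      simp only at hab
      simp [hab, hi, hi']
    · rw [Set.fst_image_prod _ (Set.singleton_nonempty j)]
      exact hBindep
  -- upper bound on independent subsets of T ∪ {(e, j₀)}
  have hub : ∀ I, I ⊆ T ∪ {(e, j₀)} → N.Indep I → I.ncard ≤ k * B.ncard := by
    intro I hIS hI
    obtain ⟨Ss, rfl, hSs⟩ := (hN I).mp hI
    refine (ncard_iUnion_le_sum Ss).trans ?_
    have : ∀ j, (Ss j).ncard ≤ B.ncard := by
      intro j
      have hsub : Ss j ⊆ T ∪ {(e, j₀)} := (Set.subset_iUnion Ss j).trans hIS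
      have himg : Prod.fst '' Ss j ⊆ B ∪ {e} := by
        rintro a ⟨⟨a', i⟩, hp, rfl⟩
        rcases hsub hp with h | h
        · exact Or.inl h.1
        · simp only [Set.mem_singleton_iff] at h
          rw [h]
          exact Or.inr rfl
      have hcard : (Ss j).ncard = (Prod.fst '' Ss j).ncard :=
        (Set.ncard_image_of_injOn (hSs j).1).symm
      rw [hcard]
      exact hMbd _ himg (hSs j).2
    calc ∑ j, (Ss j).ncard ≤ ∑ _j : Fin k, B.ncard := Finset.sum_le_sum fun j _ => this j
      _ = k * B.ncard := by simp [Finset.sum_const, mul_comm]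
  have hfinU : (T ∪ {(e, j₀)}).Finite := hTfin.union (Set.finite_singleton _)
  have hr1 : matroidRank N (T ∪ {(e, j₀)}) = k * B.ncard := by
    refine le_antisymm (mr_le N _ _ hub) ?_
    have := le_mr N hfinU Set.subset_union_left hTindep
    omega
  have hr2 : matroidRank N T = k * B.ncard := by
    refine le_antisymm (mr_le N _ _ fun I hIS hI => hub I (hIS.trans Set.subset_union_left) hI) ?_
    have := le_mr N hTfin subset_rfl hTindep
    omega
  show matroidRank N (T ∪ {(e, j₀)}) = matroidRank N T
  omega
end
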